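/- Suppose q and q̄ are continuous real-valued functions on [0, ε₁] satisfying q(z)² = -2∫₀¹ t q(zt) dt + 2 - 2z + z²/2, and there are M₁ > 0, ε₁ > 0 with M₁ε₁ < 2/3 such that |q(z) - 1| ≤ M₁ z and |q̄(z) - 1| ≤ M₁ z on [0, ε₁]. Then q = q̄ on [0, ε₁]. -/

import Mathlib

open Set intervalIntegral

set_option maxHeartbeats 800000 in
theorem stmt_2 (ε₁ M₁ : ℝ) (hM₁ : 0 < M₁) (hε₁ : 0 < ε₁) (hMε : M₁ * ε₁ < 2 / 3)
    (q qbar : ℝ → ℝ)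
    (hqc : ContinuousOn q (Icc 0 ε₁)) (hqbc : ContinuousOn qbar (Icc 0 ε₁))
    (hq : ∀ z ∈ Icc (0 : ℝ) ε₁,
      (q z) ^ 2 = -2 * (∫ t in (0 : ℝ)..1, t * q (z * t)) + 2 - 2 * z + z ^ 2 / 2)
    (hqb : ∀ z ∈ Icc (0 : ℝ) ε₁,
      (qbar z) ^ 2 = -2 * (∫ t in (0 : ℝ)..1, t * qbar (z * t)) + 2 - 2 * z + z ^ 2 / 2)
    (hq1 : ∀ z ∈ Icc (0 : ℝ) ε₁, |q z - 1| ≤ M₁ * z)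
    (hqb1 : ∀ z ∈ Icc (0 : ℝ) ε₁, |qbar z - 1| ≤ M₁ * z) :
    EqOn q qbar (Icc (0 : ℝ) ε₁) := by
  have h01 : (0:ℝ) ≤ 1 := zero_le_one
  -- integrability helper
  have hint : ∀ (f : ℝ → ℝ), ContinuousOn f (Icc 0 ε₁) → ∀ z ∈ Icc (0:ℝ) ε₁,
      IntervalIntegrable (fun t => t * f (z * t)) MeasureTheory.volume 0 1 := by
    intro f hf z hz
    apply ContinuousOn.intervalIntegrable
    rw [uIcc_of_le h01]
    apply ContinuousOn.mul continuousOn_id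
    apply hf.comp (continuousOn_const.mul continuousOn_id)
    intro t ht
    refine ⟨mul_nonneg hz.1 ht.1, ?_⟩
    calc z * t ≤ z * 1 := by nlinarith [hz.1, ht.2]
      _ ≤ ε₁ := by linarith [hz.2]
  have h0mem : (0:ℝ) ∈ Icc (0:ℝ) ε₁ := ⟨le_refl 0, le_of_lt hε₁⟩
  have hq0 : q 0 = 1 := by
    have h := hq1 0 h0mem; rw [mul_zero] at h
    have := abs_nonpos_iff.mp h; linarith [sub_eq_zero.mp this]
  have hqb0 : qbar 0 = 1 := by
    have h := hqb1 0 h0mem; rw [mul_zero] at h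
    have := abs_nonpos_iff.mp h; linarith [sub_eq_zero.mp this]
  -- the sup
  set S : Set ℝ := (fun z => |q z - qbar z| / z) '' Ioc 0 ε₁ with hS
  have hSne : S.Nonempty := ⟨_, ⟨ε₁, ⟨hε₁, le_refl _⟩, rfl⟩⟩
  have hSbdd : BddAbove S := by
    refine ⟨2 * M₁, ?_⟩
    rintro x ⟨z, hz, rfl⟩
    have hzI : z ∈ Icc (0:ℝ) ε₁ := ⟨le_of_lt hz.1, hz.2⟩
    have h1 := hq1 z hzI
    have h2 := hqb1 z hzI
    have : |q z - qbar z| ≤ 2 * M₁ * z := by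
      calc |q z - qbar z| ≤ |q z - 1| + |qbar z - 1| := by
            have := abs_sub (q z - 1) (qbar z - 1)
            calc |q z - qbar z| = |(q z - 1) - (qbar z - 1)| := by ring_nf
              _ ≤ |q z - 1| + |qbar z - 1| := abs_sub _ _
        _ ≤ 2 * M₁ * z := by linarith
    exact (div_le_iff₀ hz.1).mpr this
  set K : ℝ := sSup S with hK
  have hK0 : 0 ≤ K := by
    have hmem : |q ε₁ - qbar ε₁| / ε₁ ∈ S := ⟨ε₁, ⟨hε₁, le_refl _⟩, rfl⟩
    have := le_csSup hSbdd hmem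
    have h2 : 0 ≤ |q ε₁ - qbar ε₁| / ε₁ := div_nonneg (abs_nonneg _) (le_of_lt hε₁)
    linarith
  have hKle : ∀ z ∈ Ioc (0:ℝ) ε₁, |q z - qbar z| ≤ K * z := by
    intro z hz
    have hmem : |q z - qbar z| / z ∈ S := ⟨z, hz, rfl⟩
    have := le_csSup hSbdd hmem
    calc |q z - qbar z| = (|q z - qbar z| / z) * z := (div_mul_cancel₀ _ (ne_of_gt hz.1)).symm
      _ ≤ K * z := by nlinarith [hz.1]
  set A : ℝ := 2 - 2 * M₁ * ε₁ with hA
  have hApos : 2/3 < A := by simp [hA]; linarith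
  -- main estimate
  have main : ∀ z ∈ Ioc (0:ℝ) ε₁, |q z - qbar z| ≤ (2 * (K * z / 3)) / A := by
    intro z hz
    have hzI : z ∈ Icc (0:ℝ) ε₁ := ⟨le_of_lt hz.1, hz.2⟩
    have hiq := hint q hqc z hzI
    have hiqb := hint qbar hqbc z hzI
    have hintd : IntervalIntegrable (fun t => t * (q (z*t) - qbar (z*t)))
        MeasureTheory.volume 0 1 := by
      have := hiq.sub hiqb
      simpa [mul_sub] using this
    have hfac : (q z + qbar z) * (q z - qbar z)
        = -2 * ∫ t in (0:ℝ)..1, t * (q (z*t) - qbar (z*t)) := by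
      have e1 := hq z hzI
      have e2 := hqb z hzI
      have e3 : (∫ t in (0:ℝ)..1, t * (q (z*t) - qbar (z*t)))
          = (∫ t in (0:ℝ)..1, t * q (z*t)) - ∫ t in (0:ℝ)..1, t * qbar (z*t) := by
        rw [← integral_sub hiq hiqb]
        congr 1; ext t; ring
      rw [e3]; nlinarith [e1, e2]
    -- pointwise bound
    have hbound : ∀ t ∈ Icc (0:ℝ) 1, |t * (q (z*t) - qbar (z*t))| ≤ K * z * t^2 := by
      intro t ht
      rcases eq_or_lt_of_le ht.1 with h | h
      · simp [← h]
      · have hzt : z * t ∈ Ioc (0:ℝ) ε₁ := by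
          constructor
          · exact mul_pos hz.1 h
          · calc z * t ≤ z * 1 := by nlinarith [hz.1, ht.2]
              _ ≤ ε₁ := by linarith [hz.2]
        have := hKle (z*t) hzt
        rw [abs_mul, abs_of_nonneg ht.1]
        nlinarith [abs_nonneg (q (z*t) - qbar (z*t)), ht.1, hz.1]
    have hgint : IntervalIntegrable (fun t => K * z * t^2) MeasureTheory.volume 0 1 :=
      (Continuous.intervalIntegrable (by continuity) 0 1)
    have h2 : |∫ t in (0:ℝ)..1, t * (q (z*t) - qbar (z*t))| ≤ K * z / 3 := by
      calc |∫ t in (0:ℝ)..1, t * (q (z*t) - qbar (z*t))|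
          ≤ ∫ t in (0:ℝ)..1, |t * (q (z*t) - qbar (z*t))| :=
            abs_integral_le_integral_abs h01
        _ ≤ ∫ t in (0:ℝ)..1, K * z * t^2 :=
            integral_mono_on h01 hintd.abs hgint hbound
        _ = K * z / 3 := by
            rw [integral_const_mul, integral_pow]; ring
    -- lower bound on q z + qbar z
    have hsum : A ≤ q z + qbar z := by
      obtain ⟨a1, a2⟩ := abs_le.mp (hq1 z hzI)
      obtain ⟨b1, b2⟩ := abs_le.mp (hqb1 z hzI)
      have h3 : M₁ * z ≤ M₁ * ε₁ := mul_le_mul_of_nonneg_left hz.2 hM₁.le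
      rw [hA]; linarith
    have hsumpos : 0 < q z + qbar z := lt_of_lt_of_le (by linarith) hsum
    have hff : |q z - qbar z| * (q z + qbar z) ≤ 2 * (K * z / 3) := by
      have : |(q z + qbar z) * (q z - qbar z)| ≤ 2 * (K * z / 3) := by
        rw [hfac, abs_mul]
        have : |(-2 : ℝ)| = 2 := by norm_num
        rw [this]; linarith
      rw [abs_mul, abs_of_pos hsumpos] at this
      linarith
    rw [le_div_iff₀ (by linarith : (0:ℝ) < A)]
    nlinarith [abs_nonneg (q z - qbar z), hff, hsum]
  -- contraction
  have hKle' : K ≤ (2 / (3 * A)) * K := by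
    apply csSup_le hSne
    rintro x ⟨z, hz, rfl⟩
    have := main z hz
    rw [div_le_iff₀ hz.1]
    have hApos' : (0:ℝ) < A := by linarith
    calc |q z - qbar z| ≤ (2 * (K * z / 3)) / A := this
      _ = (2 / (3 * A)) * K * z := by field_simp
  have hKzero : K = 0 := by
    have hc : 2 / (3 * A) < 1 := by
      rw [div_lt_one (by linarith : (0:ℝ) < 3 * A)]; linarith
    nlinarith
  -- conclude
  intro z hz
  rcases eq_or_lt_of_le hz.1 with h | h
  · rw [← h, hq0, hqb0]
  · have := hKle z ⟨h, hz.2⟩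
    rw [hKzero, zero_mul] at this
    have := abs_nonpos_iff.mp this
    linarith [sub_eq_zero.mp this]
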